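/- arXiv:1311.2973 — 2 statements merged into one kernel-verified Lean document; each statement's English description precedes it below -/
import Mathlib

section
/- Let L be a bounded distributive lattice, let PF(L) denote the set of prime filters of L, and define i : L → Set (PF(L)) by i(x) = {F | x ∈ F}. Let f : L → L be a unary join-hemimorphism, and define f̄ : Set (PF(L)) → Set (PF(L)) by f̄(U) = {F | ∃ G ∈ U, ∀ a ∈ G, f a ∈ F}. Then: (1) i is an injective bounded-lattice homomorphism, i.e., i(x ⊓ y) = i(x) ∩ i(y), i(x ⊔ y) = i(x) ∪ i(y), i(⊥) = ∅, i(⊤) = PF(L), and i(x) = i(y) implies x = y; (2) i(f(x)) = f̄(i(x)) for every x ∈ L: a prime filter F contains f(x) if and only if there exists a prime filter G with x ∈ G and f a ∈ F for every a ∈ G. -/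
/-- A prime filter of a bounded distributive lattice. -/
def IsPrimeFilter {L : Type*} [DistribLattice L] [BoundedOrder L] (F : Set L) : Prop :=
  ⊤ ∈ F ∧ ⊥ ∉ F ∧ (∀ x y : L, x ∈ F → x ≤ y → y ∈ F) ∧
    (∀ x y : L, x ∈ F → y ∈ F → x ⊓ y ∈ F) ∧
    (∀ x y : L, x ⊔ y ∈ F → x ∈ F ∨ y ∈ F)

/-- The set of prime filters of `L`. -/
def PF (L : Type*) [DistribLattice L] [BoundedOrder L] : Type _ :=
  {F : Set L // IsPrimeFilter F}

/-- The Stone embedding `i : L → Set (PF L)`, `i x = {F | x ∈ F}`. -/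
def stoneMap (L : Type*) [DistribLattice L] [BoundedOrder L] (x : L) : Set (PF L) :=
  {F | x ∈ F.1}

/-- The canonical extension of a unary operation `f` to the powerset of prime filters. -/
def fBar {L : Type*} [DistribLattice L] [BoundedOrder L] (f : L → L)
    (U : Set (PF L)) : Set (PF L) :=
  {F | ∃ G ∈ U, ∀ a ∈ G.1, f a ∈ F.1}

lemma exists_primeFilter {L : Type*} [DistribLattice L] [BoundedOrder L]
    (F0 : Order.PFilter L) (I0 : Order.Ideal L)
    (h : Disjoint (F0 : Set L) (I0 : Set L)) :
    ∃ G : PF L, (F0 : Set L) ⊆ G.1 ∧ ∀ a ∈ G.1, a ∉ (I0 : Set L) := by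
  obtain ⟨J, hJ, hIJ, hFJ⟩ := DistribLattice.prime_ideal_of_disjoint_filter_ideal h
  refine ⟨⟨(J : Set L)ᶜ, ?_, ?_, ?_, ?_, ?_⟩, ?_, ?_⟩
  · exact hJ.toIsProper.top_notMem
  · exact fun h => h J.bot_mem
  · exact fun x y hx hxy hy => hx (J.lower hxy hy)
  · exact fun x y hx hy hxy => (hJ.mem_or_mem hxy).elim hx hy
  · intro x y hxy
    by_contra hc
    push_neg at hc
    simp only [Set.mem_compl_iff, not_not] at hc
    exact hxy (Order.Ideal.sup_mem hc.1 hc.2)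
  · exact Set.subset_compl_iff_disjoint_right.mpr hFJ
  · exact fun a ha hI => ha (hIJ hI)

theorem stmt_18 {L : Type*} [DistribLattice L] [BoundedOrder L]
    (f : L → L) (hf : (∀ x y : L, f (x ⊔ y) = f x ⊔ f y) ∧ f ⊥ = ⊥) :
    ((∀ x y : L, stoneMap L (x ⊓ y) = stoneMap L x ∩ stoneMap L y) ∧
     (∀ x y : L, stoneMap L (x ⊔ y) = stoneMap L x ∪ stoneMap L y) ∧
     stoneMap L ⊥ = (∅ : Set (PF L)) ∧
     stoneMap L ⊤ = (Set.univ : Set (PF L)) ∧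
     Function.Injective (stoneMap L)) ∧
    (∀ x : L, stoneMap L (f x) = fBar f (stoneMap L x)) := by
  have hmono : ∀ x y : L, x ≤ y → f x ≤ f y := by
    intro x y hxy
    have : f x ⊔ f y = f y := by rw [← hf.1, sup_eq_right.mpr hxy]
    exact le_of_sup_eq this
  -- separation: if ¬ x ≤ y then a prime filter contains x but not y
  have hsep : ∀ x y : L, ¬ x ≤ y → ∃ G : PF L, x ∈ G.1 ∧ y ∉ G.1 := by
    intro x y hxy
    have hdisj : Disjoint ((Order.PFilter.principal x : Order.PFilter L) : Set L)
        ((Order.Ideal.principal y : Order.Ideal L) : Set L) := by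
      rw [Set.disjoint_left]
      intro a ha ha'
      exact hxy (le_trans ha ha')
    obtain ⟨G, hG1, hG2⟩ := exists_primeFilter _ _ hdisj
    exact ⟨G, hG1 (le_refl x), fun hy => hG2 y hy (le_refl y)⟩
  constructor
  · refine ⟨?_, ?_, ?_, ?_, ?_⟩
    · intro x y
      ext F
      exact ⟨fun h => ⟨F.2.2.2.1 _ x h inf_le_left, F.2.2.2.1 _ y h inf_le_right⟩,
        fun ⟨h1, h2⟩ => F.2.2.2.2.1 x y h1 h2⟩
    · intro x y
      ext F
      exact ⟨fun h => F.2.2.2.2.2 x y h,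
        fun h => h.elim (fun h => F.2.2.2.1 x _ h le_sup_left)
          (fun h => F.2.2.2.1 y _ h le_sup_right)⟩
    · ext F; exact ⟨fun h => F.2.2.1 h, fun h => h.elim⟩
    · ext F; exact ⟨fun _ => trivial, fun _ => F.2.1⟩
    · intro x y hxy
      refine le_antisymm ?_ ?_
      · by_contra h
        obtain ⟨G, hx, hy⟩ := hsep x y h
        exact hy (hxy ▸ hx : G ∈ stoneMap L y)
      · by_contra h
        obtain ⟨G, hy, hx⟩ := hsep y x h
        exact hx (hxy ▸ hy : G ∈ stoneMap L x)
  · intro x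
    ext F
    constructor
    · intro hfx
      -- build ideal {a | f a ∉ F}
      have hFpf := F.2
      obtain ⟨htop, hbot, hup, hinf, hprime⟩ := hFpf
      set Jset : Set L := {a | f a ∉ F.1} with hJset
      have hJideal : Order.IsIdeal Jset := by
        refine ⟨?_, ?_, ?_⟩
        · intro a b hba ha hb
          exact ha (hup (f b) (f a) hb (hmono b a hba))
        · exact ⟨⊥, by simp [Jset, hf.2, hbot]⟩
        · intro a ha b hb
          refine ⟨a ⊔ b, ?_, le_sup_left, le_sup_right⟩
          intro hsup
          rw [hf.1] at hsup
          exact ((hprime (f a) (f b) hsup).elim ha hb)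
      have hdisj : Disjoint ((Order.PFilter.principal x : Order.PFilter L) : Set L)
          (hJideal.toIdeal : Set L) := by
        rw [Set.disjoint_left]
        intro a ha ha'
        exact ha' (hup (f x) (f a) hfx (hmono x a ha))
      obtain ⟨G, hG1, hG2⟩ := exists_primeFilter _ _ hdisj
      refine ⟨G, hG1 (le_refl x), fun a ha => ?_⟩
      by_contra hfa
      exact hG2 a ha hfa
    · rintro ⟨G, hxG, hG⟩
      exact hG x hxG
end

section
/- Let L be a bounded distributive lattice, let PF(L) denote the set of prime filters of L, and for a map f : L → L define f̄ : Set (PF(L)) → Set (PF(L)) by f̄(U) = {F | ∃ G ∈ U, ∀ a ∈ G, f a ∈ F}. Let f₁, f₂, f be unary join-hemimorphisms on L. Then: (1) if f₁(x) ≤ f(x) for all x ∈ L, then f̄₁(U) ⊆ f̄(U) for every set U of prime filters of L; (2) if f₂(f₁(x)) ≤ f(x) for all x ∈ L, then f̄₂(f̄₁(U)) ⊆ f̄(U) for every set U of prime filters of L. (The role-inclusion axioms r₁ ⊑ r and r₁ ∘ r₂ ⊑ r, in their algebraic form, are preserved when passing from L to the powerset algebra over its prime filters with the canonically defined operators.)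 -/
/-- A unary join-hemimorphism. -/
def IsJoinHemi {L : Type*} [DistribLattice L] [BoundedOrder L] (f : L → L) : Prop :=
  (∀ x y : L, f (x ⊔ y) = f x ⊔ f y) ∧ f ⊥ = ⊥

theorem stmt_19 {L : Type*} [DistribLattice L] [BoundedOrder L]
    (f₁ f₂ f : L → L)
    (hf₁ : IsJoinHemi f₁) (hf₂ : IsJoinHemi f₂) (hf : IsJoinHemi f) :
    ((∀ x : L, f₁ x ≤ f x) → ∀ U : Set (PF L), fBar f₁ U ⊆ fBar f U) ∧
    ((∀ x : L, f₂ (f₁ x) ≤ f x) → ∀ U : Set (PF L), fBar f₂ (fBar f₁ U) ⊆ fBar f U) := by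
  constructor
  · rintro h U F ⟨G, hG, hFa⟩
    exact ⟨G, hG, fun a ha => F.2.2.2.1 _ _ (hFa a ha) (h a)⟩
  · rintro h U F ⟨H, ⟨G, hG, hGH⟩, hHF⟩
    exact ⟨G, hG, fun a ha => F.2.2.2.1 _ _ (hHF _ (hGH a ha)) (h a)⟩
end
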